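/- Let A be a Noetherian commutative ring, I ⊆ A an ideal, and M an A-module. Let U ⊆ Spec A be the open complement of the vanishing locus V(I), and let M̃ denote the quasicoherent sheaf on Spec A associated to M. The restriction maps Hom_A(I^{n+1}, M) ← Hom_A(I^n, M) (precomposition with the inclusion I^{n+1} ⊆ I^n) make (Hom_A(I^n, M))_{n≥0} a direct system, and the map sending the class of f : I^n → M to the unique section of M̃ over U whose restriction to each basic open D(g) with g ∈ I is f(g^n)/g^n ∈ M_g is an isomorphism of A-modules colim_n Hom_A(I^n, M) ≅ Γ(U, M̃). -/

import Mathlib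

open AlgebraicGeometry TopologicalSpace Opposite

/-- The transition maps `Hom_A(Iⁿ, M) → Hom_A(Iⁿ⁺¹, M)` (precomposition with the inclusion
`Iⁿ⁺¹ ⊆ Iⁿ`, here for any `n ≤ m`), making `(Hom_A(Iⁿ, M))ₙ` a direct system. -/
noncomputable def extTransition (A : Type) [CommRing A] (I : Ideal A)
    (M : Type) [AddCommGroup M] [Module A M] :
    ∀ (n m : ℕ), n ≤ m → ((I ^ n : Ideal A) →ₗ[A] M) →ₗ[A] ((I ^ m : Ideal A) →ₗ[A] M) :=
  fun _ _ h => LinearMap.lcomp A M (Submodule.inclusion (Ideal.pow_le_pow_right h))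

/-- The open complement `U ⊆ Spec A` of the vanishing locus `V(I)`. -/
def complementZeroLocus (A : Type) [CommRing A] (I : Ideal A) :
    Opens (PrimeSpectrum A) :=
  ⟨(PrimeSpectrum.zeroLocus (I : Set A))ᶜ, (PrimeSpectrum.isClosed_zeroLocus _).isOpen_compl⟩

namespace Stmt1Aux

variable {A : Type} [CommRing A] {I : Ideal A} {M : Type} [AddCommGroup M] [Module A M]

lemma ext_apply {n m : ℕ} (h : n ≤ m) (f : (I ^ n : Ideal A) →ₗ[A] M)
    (x : (I ^ m : Ideal A)) :
    extTransition A I M n m h f x = f ⟨x.1, Ideal.pow_le_pow_right h x.2⟩ := rfl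

lemma apply_mul {n : ℕ} (f : (I ^ n : Ideal A) →ₗ[A] M) (a b : A) (ha : a ∈ I ^ n)
    (hab : a * b ∈ I ^ n) :
    f ⟨a * b, hab⟩ = b • f ⟨a, ha⟩ := by
  rw [← map_smul]
  congr 1
  exact Subtype.ext (by simp [smul_eq_mul, mul_comm])

lemma mk_add_same {S : Submonoid A} (m m' : M) (s : S) :
    (LocalizedModule.mk (m + m') s : LocalizedModule S M) =
      LocalizedModule.mk m s + LocalizedModule.mk m' s := by
  rw [LocalizedModule.mk_add_mk, ← smul_add, LocalizedModule.mk_cancel_common_left]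

lemma mk_indep {p : PrimeSpectrum A} {n : ℕ} (f : (I ^ n : Ideal A) →ₗ[A] M) {g g' : A}
    (hg : g ∈ I) (hg' : g' ∈ I) (hgp : g ∉ p.asIdeal) (hg'p : g' ∉ p.asIdeal) :
    (LocalizedModule.mk (f ⟨g ^ n, Ideal.pow_mem_pow hg n⟩) ⟨g ^ n, pow_mem hgp n⟩ :
        LocalizedModule p.asIdeal.primeCompl M) =
      LocalizedModule.mk (f ⟨g' ^ n, Ideal.pow_mem_pow hg' n⟩) ⟨g' ^ n, pow_mem hg'p n⟩ := by
  rw [LocalizedModule.mk_eq]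
  refine ⟨1, ?_⟩
  simp only [one_smul, Submonoid.smul_def]
  rw [← apply_mul f _ _ (Ideal.pow_mem_pow hg n)
      (Ideal.mul_mem_right _ _ (Ideal.pow_mem_pow hg n)),
    ← apply_mul f _ _ (Ideal.pow_mem_pow hg' n)
      (Ideal.mul_mem_right _ _ (Ideal.pow_mem_pow hg' n))]
  exact congrArg f (Subtype.ext (mul_comm _ _))

variable (I) in
lemma exists_gI (x : (complementZeroLocus A I : Opens (PrimeSpectrum A))) :
    ∃ g, g ∈ I ∧ g ∉ x.1.asIdeal := by
  have hx := x.2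
  simp only [complementZeroLocus, Opens.mem_mk, Set.mem_compl_iff,
    PrimeSpectrum.mem_zeroLocus, Set.not_subset] at hx
  obtain ⟨g, hg1, hg2⟩ := hx
  exact ⟨g, hg1, hg2⟩

variable (I) in
noncomputable def gsel (x : (complementZeroLocus A I : Opens (PrimeSpectrum A))) : A :=
  (exists_gI I x).choose

lemma gsel_mem (x : (complementZeroLocus A I : Opens (PrimeSpectrum A))) : gsel I x ∈ I :=
  (exists_gI I x).choose_spec.1

lemma gsel_not (x : (complementZeroLocus A I : Opens (PrimeSpectrum A))) :
    gsel I x ∉ x.1.asIdeal :=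
  (exists_gI I x).choose_spec.2

/-- the value of the section associated to `f` at `x`. -/
noncomputable def secVal (n : ℕ) (f : (I ^ n : Ideal A) →ₗ[A] M)
    (x : (complementZeroLocus A I : Opens (PrimeSpectrum A))) :
    LocalizedModule x.1.asIdeal.primeCompl M :=
  LocalizedModule.mk (f ⟨gsel I x ^ n, Ideal.pow_mem_pow (gsel_mem x) n⟩)
    ⟨gsel I x ^ n, pow_mem (gsel_not x) n⟩

lemma secVal_eq (n : ℕ) (f : (I ^ n : Ideal A) →ₗ[A] M)
    (x : (complementZeroLocus A I : Opens (PrimeSpectrum A))) {g : A} (hg : g ∈ I)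
    (hgp : g ∉ x.1.asIdeal) :
    secVal n f x =
      LocalizedModule.mk (f ⟨g ^ n, Ideal.pow_mem_pow hg n⟩) ⟨g ^ n, pow_mem hgp n⟩ :=
  mk_indep f (gsel_mem x) hg (gsel_not x) hgp

/-- mem of basic open gives mem of U -/
lemma mem_U_of_basicOpen {g : A} (hg : g ∈ I) {q : PrimeSpectrum A} (hq : g ∉ q.asIdeal) :
    q ∈ complementZeroLocus A I := by
  intro hmem
  rw [PrimeSpectrum.mem_zeroLocus] at hmem
  exact hq (hmem hg)

lemma pow_not_mem {q : PrimeSpectrum A} {g : A} (h : g ∉ q.asIdeal) (n : ℕ) :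
    g ^ n ∉ q.asIdeal :=
  q.asIdeal.primeCompl.pow_mem h n

/-- The section of `M^~` over `U` associated to `f : Iⁿ → M`. -/
noncomputable def sec (n : ℕ) (f : (I ^ n : Ideal A) →ₗ[A] M) :
    (structurePresheafInModuleCat A M).obj (op (complementZeroLocus A I)) := by
  refine ⟨fun x => secVal n f x, ?_⟩
  intro y
  refine ⟨complementZeroLocus A I ⊓ PrimeSpectrum.basicOpen (gsel I y),
    ⟨y.2, gsel_not y⟩, CategoryTheory.homOfLE inf_le_left,
    f ⟨gsel I y ^ n, Ideal.pow_mem_pow (gsel_mem y) n⟩, gsel I y ^ n, fun x => ?_⟩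
  have hx2 : gsel I y ∉ x.1.asIdeal := x.2.2
  refine ⟨pow_not_mem hx2 n, ?_⟩
  exact secVal_eq n f _ (gsel_mem y) hx2

lemma sec_apply (n : ℕ) (f : (I ^ n : Ideal A) →ₗ[A] M)
    (x : (complementZeroLocus A I : Opens (PrimeSpectrum A))) :
    (sec n f).1 x = secVal n f x := rfl

/-- `sec` as a linear map. -/
noncomputable def psi (n : ℕ) :
    ((I ^ n : Ideal A) →ₗ[A] M) →ₗ[A]
      (structurePresheafInModuleCat A M).obj (op (complementZeroLocus A I)) where
  toFun f := sec n f
  map_add' f f' := by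
    refine Subtype.ext (funext fun x => ?_)
    show secVal n (f + f') x = secVal n f x + secVal n f' x
    simp only [secVal, LinearMap.add_apply]
    rw [mk_add_same]
  map_smul' a f := by
    refine Subtype.ext (funext fun x => ?_)
    show secVal n (a • f) x = a • secVal n f x
    simp only [secVal, LinearMap.smul_apply]
    rw [LocalizedModule.smul'_mk]

lemma psi_comp (n m : ℕ) (h : n ≤ m) (f : (I ^ n : Ideal A) →ₗ[A] M) :
    psi m (extTransition A I M n m h f) = psi n f := by
  refine Subtype.ext (funext fun x => ?_)
  show secVal m (extTransition A I M n m h f) x = secVal n f x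
  set g := gsel I x with hgdef
  have h1 : g ^ m ∈ I ^ n := Ideal.pow_le_pow_right h (Ideal.pow_mem_pow (gsel_mem x) m)
  have h2 : g ^ n * g ^ (m - n) ∈ I ^ n :=
    Ideal.mul_mem_right _ _ (Ideal.pow_mem_pow (gsel_mem x) n)
  have key : extTransition A I M n m h f ⟨g ^ m, Ideal.pow_mem_pow (gsel_mem x) m⟩ =
      g ^ (m - n) • f ⟨g ^ n, Ideal.pow_mem_pow (gsel_mem x) n⟩ := by
    rw [ext_apply]
    have heq : (⟨g ^ m, h1⟩ : (I ^ n : Ideal A)) = ⟨g ^ n * g ^ (m - n), h2⟩ :=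
      Subtype.ext (show g ^ m = g ^ n * g ^ (m - n) by rw [← pow_add, Nat.add_sub_cancel' h])
    rw [heq, apply_mul f _ _ (Ideal.pow_mem_pow (gsel_mem x) n)]
  unfold secVal
  rw [key, LocalizedModule.mk_eq]
  refine ⟨1, ?_⟩
  simp only [one_smul, Submonoid.smul_def]
  rw [smul_smul, ← pow_add, Nat.add_sub_cancel' h]

section Noetherian

variable [IsNoetherianRing A]

lemma pow_smul_zero_mono {a : A} {x : M} {k l : ℕ} (h : a ^ k • x = 0) (hkl : k ≤ l) :
    a ^ l • x = 0 := by
  rw [← Nat.sub_add_cancel hkl, pow_add, mul_smul, h, smul_zero]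

lemma exists_pow_smul_eq_zero (a : A) (x : M)
    (H : ∀ q : PrimeSpectrum A, a ∉ q.asIdeal → ∃ u, u ∉ q.asIdeal ∧ u • x = 0) :
    ∃ k, a ^ k • x = 0 := by
  have hmem : a ∈ (Ideal.torsionOf A M x).radical := by
    rw [Ideal.radical_eq_sInf, Ideal.mem_sInf]
    intro J hJ
    by_contra ha
    obtain ⟨u, hu1, hu2⟩ := H ⟨J, hJ.2⟩ ha
    exact hu1 (hJ.1 ((Ideal.mem_torsionOf_iff x u).mpr hu2))
  obtain ⟨k, hk⟩ := hmem
  exact ⟨k, (Ideal.mem_torsionOf_iff x _).mp hk⟩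

variable (I) in
lemma exists_pow_le_of_primes (J : Ideal A)
    (hJ : ∀ p : PrimeSpectrum A, J ≤ p.asIdeal → I ≤ p.asIdeal) :
    ∃ e, I ^ e ≤ J := by
  apply Ideal.exists_pow_le_of_le_radical_of_fg ?_ (IsNoetherian.noetherian I)
  rw [Ideal.radical_eq_sInf]
  apply le_sInf
  intro J' hJ'
  exact hJ ⟨J', hJ'.2⟩ hJ'.1

lemma mk_eq_zero_iff {q : PrimeSpectrum A} (m : M) (s : q.asIdeal.primeCompl) :
    (LocalizedModule.mk m s : LocalizedModule q.asIdeal.primeCompl M) = 0 ↔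
      ∃ u, u ∉ q.asIdeal ∧ u • m = 0 := by
  constructor
  · intro h
    rw [show (0 : LocalizedModule q.asIdeal.primeCompl M) =
      LocalizedModule.mk 0 1 from (LocalizedModule.zero_mk 1).symm, LocalizedModule.mk_eq] at h
    obtain ⟨u, hu⟩ := h
    refine ⟨u.1, u.2, ?_⟩
    simpa [Submonoid.smul_def] using hu
  · rintro ⟨u, hu1, hu2⟩
    rw [show (0 : LocalizedModule q.asIdeal.primeCompl M) =
      LocalizedModule.mk 0 1 from (LocalizedModule.zero_mk 1).symm, LocalizedModule.mk_eq]
    refine ⟨⟨u, hu1⟩, ?_⟩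
    simpa [Submonoid.smul_def] using congrArg (fun z => (1 : A) • z) hu2

lemma psi_eq_zero {n : ℕ} {f : (I ^ n : Ideal A) →ₗ[A] M} (h : psi n f = 0) :
    ∃ m, ∃ hnm : n ≤ m, extTransition A I M n m hnm f = 0 := by
  -- pointwise vanishing
  have hval : ∀ (q : PrimeSpectrum A) (g : A) (hg : g ∈ I) (hq : g ∉ q.asIdeal),
      (LocalizedModule.mk (f ⟨g ^ n, Ideal.pow_mem_pow hg n⟩) ⟨g ^ n, pow_not_mem hq n⟩ :
        LocalizedModule q.asIdeal.primeCompl M) = 0 := by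
    intro q g hg hq
    have hm : q ∈ complementZeroLocus A I := mem_U_of_basicOpen hg hq
    have h2 := congrArg
      (fun s : (structurePresheafInModuleCat A M).obj
        (op (complementZeroLocus A I)) => s.1 ⟨q, hm⟩) h
    simp only at h2
    rw [show (psi n f).1 ⟨q, hm⟩ = secVal n f ⟨q, hm⟩ from rfl,
      secVal_eq n f ⟨q, hm⟩ hg hq] at h2
    exact h2
  obtain ⟨T, hT⟩ := IsNoetherian.noetherian I
  have htI : ∀ t ∈ T, t ∈ I := fun t ht => hT ▸ Ideal.subset_span ht
  have H : ∀ t : {x // x ∈ T}, ∃ k, (t : A) ^ k •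
      f ⟨(t : A) ^ n, Ideal.pow_mem_pow (htI t t.2) n⟩ = 0 := by
    intro t
    apply exists_pow_smul_eq_zero
    intro q hq
    have := hval q t (htI t t.2) hq
    rw [mk_eq_zero_iff] at this
    exact this
  choose k hk using H
  set K := Finset.univ.sup k with hK
  set J : Ideal A := Ideal.span ((fun t => t ^ (n + (K + 1))) '' (T : Set A)) with hJdef
  have hJIn : J ≤ I ^ n := by
    rw [Ideal.span_le]
    rintro _ ⟨t, htT, rfl⟩
    exact Ideal.pow_le_pow_right (by omega) (Ideal.pow_mem_pow (htI t htT) (n + (K + 1)))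
  have hprimes : ∀ p : PrimeSpectrum A, J ≤ p.asIdeal → I ≤ p.asIdeal := by
    intro p hp
    rw [← hT, Submodule.span_le]
    intro t htT
    have : t ^ (n + (K + 1)) ∈ p.asIdeal := hp (Ideal.subset_span ⟨t, htT, rfl⟩)
    exact (p.isPrime.pow_mem_iff_mem (n + (K + 1)) (by omega)).mp this
  obtain ⟨e, he⟩ := exists_pow_le_of_primes I J hprimes
  refine ⟨e + n, by omega, ?_⟩
  ext x
  have hxJ : x.1 ∈ J := he (Ideal.pow_le_pow_right (by omega) x.2)
  rw [ext_apply]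
  show f ⟨x.1, _⟩ = (0 : M)
  have main : ∀ a, ∀ (ha : a ∈ J) (h2 : a ∈ (I ^ n : Ideal A)), f ⟨a, h2⟩ = 0 := by
    intro a ha
    induction ha using Submodule.span_induction with
    | mem a' ha' =>
      obtain ⟨t, htT, rfl⟩ := ha'
      intro h2
      have hmul : t ^ n * t ^ (K + 1) ∈ (I ^ n : Ideal A) :=
        Ideal.mul_mem_right _ _ (Ideal.pow_mem_pow (htI t htT) n)
      have heq : (⟨t ^ (n + (K + 1)), h2⟩ : (I ^ n : Ideal A)) = ⟨t ^ n * t ^ (K + 1), hmul⟩ :=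
        Subtype.ext (show t ^ (n + (K + 1)) = t ^ n * t ^ (K + 1) from pow_add t n (K + 1))
      rw [heq, apply_mul f _ _ (Ideal.pow_mem_pow (htI t htT) n) hmul]
      refine pow_smul_zero_mono (hk ⟨t, htT⟩) ?_
      exact Nat.le_succ_of_le (Finset.le_sup (Finset.mem_univ (⟨t, htT⟩ : {x // x ∈ T})))
    | zero =>
      intro h2
      rw [show (⟨(0 : A), h2⟩ : (I ^ n : Ideal A)) = 0 from Subtype.ext rfl, map_zero]
    | add a b ha hb iha ihb =>
      intro h2
      have ha2 : a ∈ (I ^ n : Ideal A) := hJIn ha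
      have hb2 : b ∈ (I ^ n : Ideal A) := hJIn hb
      rw [show (⟨a + b, h2⟩ : (I ^ n : Ideal A)) = ⟨a, ha2⟩ + ⟨b, hb2⟩ from Subtype.ext rfl,
        map_add, iha ha2, ihb hb2, add_zero]
    | smul r a ha iha =>
      intro h2
      have ha2 : a ∈ (I ^ n : Ideal A) := hJIn ha
      rw [show (⟨r • a, h2⟩ : (I ^ n : Ideal A)) = r • ⟨a, ha2⟩ from Subtype.ext rfl,
        map_smul, iha ha2, smul_zero]
  exact main x.1 hxJ _

lemma eq_mk_of_smul {S : Submonoid A} (X : LocalizedModule S M) (t : S) (y : M)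
    (h : (t : A) • X = LocalizedModule.mk y 1) : X = LocalizedModule.mk y t := by
  induction X using LocalizedModule.induction_on with
  | _ x s =>
    rw [LocalizedModule.smul'_mk, LocalizedModule.mk_eq] at h
    obtain ⟨u, hu⟩ := h
    rw [LocalizedModule.mk_eq]
    refine ⟨u, ?_⟩
    simpa [Submonoid.smul_def] using hu

lemma mk_pow_boost {q : PrimeSpectrum A} (m : M) {h : A} (hq : h ∉ q.asIdeal) {k l : ℕ}
    (hkl : k ≤ l) :
    (LocalizedModule.mk m ⟨h ^ k, pow_not_mem hq k⟩ : LocalizedModule q.asIdeal.primeCompl M) =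
      LocalizedModule.mk (h ^ (l - k) • m) ⟨h ^ l, pow_not_mem hq l⟩ := by
  rw [LocalizedModule.mk_eq]
  refine ⟨1, ?_⟩
  simp only [one_smul, Submonoid.smul_def]
  rw [smul_smul, ← pow_add, Nat.add_sub_cancel' hkl]

/-- Pointwise local representation of a section by a fraction with denominator a power of an
element of `I`. -/
lemma local_rep (s : (structurePresheafInModuleCat A M).obj
      (op (complementZeroLocus A I)))
    (y : (complementZeroLocus A I : Opens (PrimeSpectrum A))) :
    ∃ (h : A) (m : M) (kk : ℕ), h ∈ I ∧ h ∉ y.1.asIdeal ∧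
      ∀ (q : PrimeSpectrum A) (hq : q ∈ complementZeroLocus A I) (hq2 : h ∉ q.asIdeal),
        s.1 ⟨q, hq⟩ = LocalizedModule.mk m ⟨h ^ kk, pow_not_mem hq2 kk⟩ := by
  obtain ⟨V, hyV, i, m, r, w⟩ := s.2 y
  obtain ⟨_, ⟨b, rfl⟩, hyb, hbV⟩ :=
    PrimeSpectrum.isTopologicalBasis_basic_opens.exists_subset_of_mem_open hyV V.2
  set g0 := gsel I y with hg0
  set b' := b * g0 with hb'
  have hb'I : b' ∈ I := Ideal.mul_mem_left _ b (gsel_mem y)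
  have hb'y : b' ∉ y.1.asIdeal :=
    y.1.asIdeal.primeCompl.mul_mem ((PrimeSpectrum.mem_basicOpen b _).mp hyb) (gsel_not y)
  -- on D(b') the section is m / r
  have hP : ∀ (q : PrimeSpectrum A) (hq2 : b' ∉ q.asIdeal),
      r ∉ q.asIdeal ∧ ∀ (hq : q ∈ complementZeroLocus A I),
        r • s.1 ⟨q, hq⟩ = LocalizedModule.mk m 1 := by
    intro q hq2
    have hqb : q ∈ PrimeSpectrum.basicOpen b := by
      rw [PrimeSpectrum.mem_basicOpen]
      exact fun hmem => hq2 (Ideal.mul_mem_right _ _ hmem)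
    have hqV : q ∈ V := hbV hqb
    obtain ⟨hr, heq⟩ := w ⟨q, hqV⟩
    exact ⟨hr, fun hq => by
      rw [show s.1 ⟨q, hq⟩ = LocalizedModule.mk m ⟨r, hr⟩ from heq, LocalizedModule.smul'_mk]
      exact LocalizedModule.mk_cancel ⟨r, hr⟩ m⟩
  -- b'^c1 = d * r
  have hbr : PrimeSpectrum.basicOpen b' ≤ PrimeSpectrum.basicOpen r := fun q hq =>
    (hP q hq).1
  rw [PrimeSpectrum.basicOpen_le_basicOpen_iff] at hbr
  obtain ⟨c1, hc1⟩ := hbr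
  obtain ⟨d, hd⟩ := Ideal.mem_span_singleton'.mp hc1
  refine ⟨b', d • m, c1, hb'I, hb'y, ?_⟩
  intro q hq hq2
  apply eq_mk_of_smul
  show (b' ^ c1 : A) • _ = _
  rw [← hd, mul_smul]
  rw [(hP q hq2).2 hq]
  rw [LocalizedModule.smul'_mk]

lemma exists_rep (s : (structurePresheafInModuleCat A M).obj
      (op (complementZeroLocus A I))) :
    ∃ (n : ℕ) (f : (I ^ n : Ideal A) →ₗ[A] M), psi n f = s := by
  classical
  -- pointwise data
  choose hF mF kF hFI hFy hFeq using fun y => local_rep s y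
  -- finite subcover
  have hcovset : (complementZeroLocus A I : Set (PrimeSpectrum A)) ⊆
      ⋃ y : (complementZeroLocus A I : Opens (PrimeSpectrum A)),
        (PrimeSpectrum.basicOpen (hF y) : Set (PrimeSpectrum A)) := by
    intro p hp
    exact Set.mem_iUnion.mpr ⟨⟨p, hp⟩, hFy ⟨p, hp⟩⟩
  obtain ⟨t, ht⟩ := (TopologicalSpace.NoetherianSpace.isCompact
      (complementZeroLocus A I : Set (PrimeSpectrum A))).elim_finite_subcover
      (fun y : (complementZeroLocus A I : Opens (PrimeSpectrum A)) =>
        (PrimeSpectrum.basicOpen (hF y) : Set (PrimeSpectrum A)))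
      (fun y => (PrimeSpectrum.basicOpen (hF y)).2) hcovset
  set ι := {y : (complementZeroLocus A I : Opens (PrimeSpectrum A)) // y ∈ t} with hι
  set h : ι → A := fun i => hF i.1 with hh
  have hI' : ∀ i : ι, h i ∈ I := fun i => hFI i.1
  have hcov' : ∀ x : (complementZeroLocus A I : Opens (PrimeSpectrum A)),
      ∃ i : ι, h i ∉ x.1.asIdeal := by
    intro x
    have := ht x.2
    simp only [Set.mem_iUnion] at this
    obtain ⟨y, hyt, hy⟩ := this
    exact ⟨⟨y, hyt⟩, hy⟩
  -- normalize exponents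
  set n1 := Finset.univ.sup (fun i : ι => kF i.1) with hn1
  set mA : ι → M := fun i => hF i.1 ^ (n1 - kF i.1) • mF i.1 with hmA
  have hAeq : ∀ (i : ι) (q : PrimeSpectrum A) (hq : q ∈ complementZeroLocus A I)
      (hq2 : h i ∉ q.asIdeal),
      s.1 ⟨q, hq⟩ = LocalizedModule.mk (mA i) ⟨h i ^ n1, pow_not_mem hq2 n1⟩ := by
    intro i q hq hq2
    rw [hFeq i.1 q hq hq2]
    exact mk_pow_boost (mF i.1) hq2
      (Finset.le_sup (f := fun i : ι => kF i.1) (Finset.mem_univ i))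
  clear_value mA
  -- pairwise compatibility after boosting
  have H2 : ∀ ij : ι × ι, ∃ kk, (h ij.1 * h ij.2) ^ kk •
      (h ij.2 ^ n1 • mA ij.1 - h ij.1 ^ n1 • mA ij.2) = 0 := by
    rintro ⟨i, j⟩
    apply exists_pow_smul_eq_zero
    intro q hq
    have hqi : h i ∉ q.asIdeal := fun hmem => hq (Ideal.mul_mem_right _ _ hmem)
    have hqj : h j ∉ q.asIdeal := fun hmem => hq (Ideal.mul_mem_left _ _ hmem)
    have hqU : q ∈ complementZeroLocus A I := mem_U_of_basicOpen (hI' i) hqi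
    have heq : (LocalizedModule.mk (mA i) ⟨h i ^ n1, pow_not_mem hqi n1⟩ :
        LocalizedModule q.asIdeal.primeCompl M) =
        LocalizedModule.mk (mA j) ⟨h j ^ n1, pow_not_mem hqj n1⟩ := by
      rw [← hAeq i q hqU hqi, ← hAeq j q hqU hqj]
    rw [LocalizedModule.mk_eq] at heq
    obtain ⟨u, hu⟩ := heq
    simp only [Submonoid.smul_def, smul_smul] at hu
    refine ⟨u.1, u.2, ?_⟩
    rw [smul_sub, smul_smul, smul_smul, hu, sub_self]
  choose k2F hk2 using H2
  set k2 := Finset.univ.sup k2F with hk2def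
  set n := n1 + (k2 + 1) with hn
  set mB : ι → M := fun i => h i ^ (n - n1) • mA i with hmB
  have hBeq : ∀ (i : ι) (q : PrimeSpectrum A) (hq : q ∈ complementZeroLocus A I)
      (hq2 : h i ∉ q.asIdeal),
      s.1 ⟨q, hq⟩ = LocalizedModule.mk (mB i) ⟨h i ^ n, pow_not_mem hq2 n⟩ := by
    intro i q hq hq2
    rw [hAeq i q hq hq2]
    exact mk_pow_boost (mA i) hq2 (by omega)
  have hβ : ∀ i j : ι, h j ^ n • mB i = h i ^ n • mB j := by
    intro i j
    have hd : (h i * h j) ^ (k2 + 1) • (h j ^ n1 • mA i - h i ^ n1 • mA j) = 0 :=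
      pow_smul_zero_mono (hk2 (i, j))
        (le_trans (Finset.le_sup (f := k2F) (Finset.mem_univ (i, j))) (Nat.le_succ k2))
    have e1 : h j ^ n • mB i = (h i * h j) ^ (k2 + 1) • (h j ^ n1 • mA i) := by
      rw [hmB]
      simp only [smul_smul]
      congr 1
      have : n - n1 = k2 + 1 := by omega
      rw [this, hn]
      ring
    have e2 : h i ^ n • mB j = (h i * h j) ^ (k2 + 1) • (h i ^ n1 • mA j) := by
      rw [hmB]
      simp only [smul_smul]
      congr 1
      have : n - n1 = k2 + 1 := by omega
      rw [this, hn]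
      ring
    rw [e1, e2, ← sub_eq_zero, ← smul_sub, hd]
  clear_value mB
  -- the ideal J = (h i ^ n)
  set J : Ideal A := Ideal.span (Set.range fun i : ι => h i ^ n) with hJdef
  have hUprime : ∀ p : PrimeSpectrum A, (∀ i : ι, h i ∈ p.asIdeal) → I ≤ p.asIdeal := by
    intro p hp
    by_contra hIp
    have hpU : p ∈ complementZeroLocus A I := by
      intro hmem
      rw [PrimeSpectrum.mem_zeroLocus] at hmem
      exact hIp hmem
    obtain ⟨i, hi⟩ := hcov' ⟨p, hpU⟩
    exact hi (hp i)
  have hJprimes : ∀ p : PrimeSpectrum A, J ≤ p.asIdeal → I ≤ p.asIdeal := by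
    intro p hp
    refine hUprime p fun i => ?_
    exact (p.isPrime.pow_mem_iff_mem n (by omega)).mp (hp (Ideal.subset_span ⟨i, rfl⟩))
  obtain ⟨e, he⟩ := exists_pow_le_of_primes I J hJprimes
  -- the linear maps
  set phi : ℕ → ((ι → A) →ₗ[A] A) := fun ex =>
    { toFun := fun a => ∑ i, a i * h i ^ ex
      map_add' := fun a b => by simp [add_mul, Finset.sum_add_distrib]
      map_smul' := fun r a => by simp [Finset.mul_sum, mul_assoc] } with hphi
  set theta : (ι → A) →ₗ[A] M :=
    { toFun := fun a => ∑ i, a i • mB i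
      map_add' := fun a b => by simp [add_smul, Finset.sum_add_distrib]
      map_smul' := fun r a => by simp [mul_smul, Finset.smul_sum] } with htheta
  have hthK : ∀ a ∈ LinearMap.ker (phi n), ∀ j : ι, h j ^ n • theta a = 0 := by
    intro a ha j
    have : h j ^ n • theta a = (∑ i, a i * h i ^ n) • mB j := by
      show h j ^ n • ∑ i, a i • mB i = _
      rw [Finset.smul_sum, Finset.sum_smul]
      refine Finset.sum_congr rfl fun i _ => ?_
      rw [smul_comm, hβ i j, smul_smul]
    rw [this, show ∑ i, a i * h i ^ n = phi n a from rfl,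
      LinearMap.mem_ker.mp ha, zero_smul]
  have hthJ : ∀ a ∈ LinearMap.ker (phi n), ∀ z ∈ J, z • theta a = 0 := by
    intro a ha z hz
    induction hz using Submodule.span_induction with
    | mem z' hz' =>
      obtain ⟨j, rfl⟩ := hz'
      exact hthK a ha j
    | zero => rw [zero_smul]
    | add x y hx hy ihx ihy => rw [add_smul, ihx, ihy, add_zero]
    | smul r x hx ihx => rw [smul_eq_mul, mul_smul, ihx, smul_zero]
  -- Artin-Rees
  obtain ⟨c, hc⟩ := Ideal.exists_pow_inf_eq_pow_smul I (LinearMap.ker (phi n))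
  set d := c + e with hd
  have hker : ∀ a, phi n a = 0 → (∀ i, a i ∈ (I ^ d : Ideal A)) → theta a = 0 := by
    intro a ha hai
    have hmem : a ∈ (I ^ d • ⊤ ⊓ LinearMap.ker (phi n) : Submodule A (ι → A)) := by
      refine Submodule.mem_inf.mpr ⟨?_, LinearMap.mem_ker.mpr ha⟩
      have haeq : a = ∑ i, a i • (Pi.single i (1 : A) : ι → A) := by
        funext j
        simp [Pi.single_apply, Finset.sum_apply, mul_ite]
        rw [Finset.sum_eq_single j (fun b _ hb => if_neg (Ne.symm hb)) (by simp)]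
        exact (if_pos rfl).symm
      rw [haeq]
      exact Submodule.sum_mem _ fun i _ =>
        Submodule.smul_mem_smul (hai i) Submodule.mem_top
    rw [hc d (by omega)] at hmem
    have hdc : d - c = e := by omega
    rw [hdc] at hmem
    refine Submodule.smul_induction_on hmem ?_ ?_
    · intro r hr v hv
      rw [map_smul]
      exact hthJ v (Submodule.mem_inf.mp hv).2 r (he hr)
    · intro x y hx hy
      rw [map_add, hx, hy, add_zero]
  -- the target power of I
  have hphisingle : ∀ (ex : ℕ) (i : ι), phi ex (Pi.single i 1) = h i ^ ex := by
    intro ex i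
    show ∑ j, (Pi.single i (1 : A) : ι → A) j * h j ^ ex = _
    simp [Pi.single_apply]
    rw [Finset.sum_eq_single i (fun b _ hb => if_neg hb) (by simp)]
    exact if_pos rfl
  have hrangeprime : ∀ p : PrimeSpectrum A, LinearMap.range (phi (n + d)) ≤ p.asIdeal →
      I ≤ p.asIdeal := by
    intro p hp
    refine hUprime p fun i => ?_
    have hmem : h i ^ (n + d) ∈ LinearMap.range (phi (n + d)) :=
      ⟨Pi.single i 1, hphisingle (n + d) i⟩
    exact (p.isPrime.pow_mem_iff_mem (n + d) (by omega)).mp (hp hmem)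
  obtain ⟨eN, heN⟩ := exists_pow_le_of_primes I (LinearMap.range (phi (n + d))) hrangeprime
  set mulmap : (ι → A) →ₗ[A] (ι → A) :=
    { toFun := fun a i => a i * h i ^ d
      map_add' := fun a b => by funext i; simp [add_mul]
      map_smul' := fun r a => by funext i; simp [mul_assoc] } with hmulmap
  set zeta := theta.comp mulmap with hzeta
  have hzker : LinearMap.ker (phi (n + d)) ≤ LinearMap.ker zeta := by
    intro a ha
    rw [LinearMap.mem_ker] at ha ⊢
    show theta (mulmap a) = 0
    apply hker
    · show ∑ i, (a i * h i ^ d) * h i ^ n = 0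
      rw [show (0 : A) = phi (n + d) a from ha.symm]
      show _ = ∑ i, a i * h i ^ (n + d)
      refine Finset.sum_congr rfl fun i _ => ?_
      rw [mul_assoc, ← pow_add, Nat.add_comm d n]
    · intro i
      show a i * h i ^ d ∈ (I ^ d : Ideal A)
      exact Ideal.mul_mem_left _ _ (Ideal.pow_mem_pow (hI' i) d)
  set Fhat : LinearMap.range (phi (n + d)) →ₗ[A] M :=
    (Submodule.liftQ (LinearMap.ker (phi (n + d))) zeta hzker).comp
      (LinearMap.quotKerEquivRange (phi (n + d))).symm.toLinearMap with hFhatdef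
  have hFhat_eq : ∀ a : ι → A,
      Fhat ⟨phi (n + d) a, LinearMap.mem_range_self _ a⟩ = zeta a := by
    intro a
    show (Submodule.liftQ _ zeta hzker) ((LinearMap.quotKerEquivRange (phi (n + d))).symm
      ⟨phi (n + d) a, LinearMap.mem_range_self _ a⟩) = zeta a
    rw [LinearMap.quotKerEquivRange_symm_apply_image]
    rfl
  set F : ((I ^ eN : Ideal A) : Submodule A A) →ₗ[A] M :=
    Fhat.comp (Submodule.inclusion heN) with hFdef
  refine ⟨eN, F, ?_⟩
  refine Subtype.ext (funext fun x => ?_)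
  obtain ⟨i, hix⟩ := hcov' x
  show secVal eN F x = s.1 x
  rw [secVal_eq eN F x (hI' i) hix]
  have hxeq : s.1 x = LocalizedModule.mk (mB i) ⟨h i ^ n, pow_not_mem hix n⟩ :=
    hBeq i x.1 x.2 hix
  rw [hxeq]
  obtain ⟨a, ha⟩ := LinearMap.mem_range.mp (heN (Ideal.pow_mem_pow (hI' i) eN))
  have hFval : F ⟨h i ^ eN, Ideal.pow_mem_pow (hI' i) eN⟩ = zeta a := by
    show Fhat (Submodule.inclusion heN ⟨h i ^ eN, _⟩) = zeta a
    have hsub : (Submodule.inclusion heN ⟨h i ^ eN, Ideal.pow_mem_pow (hI' i) eN⟩ :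
        LinearMap.range (phi (n + d))) = ⟨phi (n + d) a, LinearMap.mem_range_self _ a⟩ :=
      Subtype.ext ha.symm
    rw [hsub, hFhat_eq]
  rw [hFval]
  have key : h i ^ (n + d) • zeta a = phi (n + d) a • (h i ^ d • mB i) := by
    show h i ^ (n + d) • ∑ j, (a j * h j ^ d) • mB j =
      (∑ j, a j * h j ^ (n + d)) • (h i ^ d • mB i)
    rw [Finset.smul_sum, Finset.sum_smul]
    refine Finset.sum_congr rfl fun j _ => ?_
    calc h i ^ (n + d) • ((a j * h j ^ d) • mB j)
        = (h i ^ d * (a j * h j ^ d)) • (h i ^ n • mB j) := by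
          rw [smul_smul, smul_smul]; congr 1; ring
      _ = (h i ^ d * (a j * h j ^ d)) • (h j ^ n • mB i) := by rw [hβ j i]
      _ = (a j * h j ^ (n + d)) • (h i ^ d • mB i) := by
          rw [smul_smul, smul_smul]; congr 1; ring
  rw [LocalizedModule.mk_eq]
  refine ⟨⟨h i ^ (n + d), pow_not_mem hix (n + d)⟩, ?_⟩
  simp only [Submonoid.smul_def, smul_smul]
  have lhs : (h i ^ (n + d) * h i ^ n) • zeta a = ((h i ^ n * h i ^ eN) * h i ^ d) • mB i := by
    rw [mul_comm, ← smul_smul, key, ha, smul_smul, smul_smul]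
  rw [lhs]
  congr 1
  ring


end Noetherian

end Stmt1Aux

/-- Let `A` be a Noetherian commutative ring, `I ⊆ A` an ideal and `M` an
`A`-module.  Let `U ⊆ Spec A` be the open complement of `V(I)` and `M̃` the quasicoherent sheaf
on `Spec A` associated to `M`.  The restriction maps make `(Hom_A(Iⁿ, M))ₙ` a direct system,
and the map sending the class of `f : Iⁿ → M` to the unique section of `M̃` over `U` whose
restriction to each basic open `D(g)` with `g ∈ I` is `f(gⁿ)/gⁿ` (i.e. whose value at each
prime `p ∈ D(g)` is the fraction `f(gⁿ)/gⁿ ∈ M_p`) is an `A`-module isomorphism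
`colimₙ Hom_A(Iⁿ, M) ≅ Γ(U, M̃)`. -/
theorem stmt1 (A : Type) [CommRing A] [IsNoetherianRing A] (I : Ideal A)
    (M : Type) [AddCommGroup M] [Module A M] :
    -- the transition maps make `(Hom_A(Iⁿ, M))ₙ` a direct system
    DirectedSystem (fun n => (I ^ n : Ideal A) →ₗ[A] M)
      (fun n m h => extTransition A I M n m h) ∧
    -- the colimit of this direct system is `Γ(U, M̃)`, via the map described above
    ∃ e : Module.DirectLimit (fun n => (I ^ n : Ideal A) →ₗ[A] M) (extTransition A I M)
        ≃ₗ[A] ((structurePresheafInModuleCat A M).obj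
            (op (complementZeroLocus A I))),
      ∀ (n : ℕ) (f : (I ^ n : Ideal A) →ₗ[A] M)
        (p : PrimeSpectrum A) (hp : p ∈ complementZeroLocus A I)
        (g : A) (hgI : g ∈ I) (hgp : g ∉ p.asIdeal),
        (e (Module.DirectLimit.of A ℕ (fun n => (I ^ n : Ideal A) →ₗ[A] M)
            (extTransition A I M) n f)).1 ⟨p, hp⟩ =
          LocalizedModule.mk (f ⟨g ^ n, Ideal.pow_mem_pow hgI n⟩)
            ⟨g ^ n, pow_mem hgp n⟩ := by
  constructor
  · constructor
    · intro n f
      ext x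
      simp only [Stmt1Aux.ext_apply]
    · intro k j i hij hjk f
      ext x
      simp only [Stmt1Aux.ext_apply]
  · set Psi := Module.DirectLimit.lift A ℕ (fun n => (I ^ n : Ideal A) →ₗ[A] M)
      (extTransition A I M) (fun n => Stmt1Aux.psi n)
      (fun n m hnm f => Stmt1Aux.psi_comp n m hnm f) with hPsi
    have hker : ∀ z, Psi z = 0 → z = 0 := by
      intro z hz
      obtain ⟨n, f, rfl⟩ := Module.DirectLimit.exists_of z
      rw [hPsi, Module.DirectLimit.lift_of] at hz
      obtain ⟨m, hnm, h0⟩ := Stmt1Aux.psi_eq_zero hz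
      have hof := Module.DirectLimit.of_f (R := A) (ι := ℕ)
        (G := fun n => (I ^ n : Ideal A) →ₗ[A] M) (f := extTransition A I M)
        (i := n) (j := m) (hij := hnm) (x := f)
      rw [← hof, h0, map_zero]
    have hinj : Function.Injective Psi := by
      intro a b hab
      have := hker (a - b) (by rw [map_sub, hab, sub_self])
      exact sub_eq_zero.mp this
    have hsurj : Function.Surjective Psi := by
      intro s
      obtain ⟨n, f, hf⟩ := Stmt1Aux.exists_rep s
      exact ⟨Module.DirectLimit.of A ℕ (fun n => (I ^ n : Ideal A) →ₗ[A] M)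
        (extTransition A I M) n f, by rw [hPsi, Module.DirectLimit.lift_of]; exact hf⟩
    refine ⟨LinearEquiv.ofBijective Psi ⟨hinj, hsurj⟩, ?_⟩
    intro n f p hp g hgI hgp
    show (Psi (Module.DirectLimit.of A ℕ (fun n => (I ^ n : Ideal A) →ₗ[A] M)
      (extTransition A I M) n f)).1 ⟨p, hp⟩ = _
    rw [hPsi, Module.DirectLimit.lift_of]
    exact Stmt1Aux.secVal_eq n f ⟨p, hp⟩ hgI hgp
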